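/- Let n ≥ 3 be odd, set α = (n−1)! + (n−2)! and χ(t) = t^n − αt, let X_1 = X(a(1)) where a(1) = (−(n−1), −(n−2), …, −1), and let Y_0 be the n×n matrix with superdiagonal entries all 1. Then χ(X_1 + Y_0^{n−2}) = −2α(X_1 + Y_0^{n−2}), and the matrix Y_0 − 2α(X_1 + Y_0^{n−2}) is not nilpotent; consequently the transformation Φ_{−p} ∘ Ψ_χ ∘ Φ_p with p(t) = t^{n−2} does not fix the conjugacy class of (X_1, Y_0). -/
import Mathlib


open Matrix Polynomial

noncomputable section

/-- `n×n` complex matrices. -/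
abbrev Mat (n : ℕ) := Matrix (Fin n) (Fin n) ℂ

/-- The Calogero–Moser condition: `[X,Y] + I` has rank one. -/
def IsCMPair {n : ℕ} (P : Mat n × Mat n) : Prop :=
  (P.1 * P.2 - P.2 * P.1 + 1).rank = 1

/-- Simultaneous conjugacy of pairs of matrices. -/
def SimConj {n : ℕ} (P Q : Mat n × Mat n) : Prop :=
  ∃ A : (Mat n)ˣ, Q.1 = ↑A⁻¹ * P.1 * ↑A ∧ Q.2 = ↑A⁻¹ * P.2 * ↑A

/-- Conjugation by a unit, as a `ℂ`-algebra homomorphism. -/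
def conjAlgHom {n : ℕ} (A : (Mat n)ˣ) : Mat n →ₐ[ℂ] Mat n where
  toFun X := ↑A⁻¹ * X * ↑A
  map_one' := by show (↑A⁻¹ : Mat n) * 1 * ↑A = 1; rw [mul_one, Units.inv_mul]
  map_mul' X Y := by simp only [mul_assoc, Units.mul_inv_cancel_left]
  map_zero' := by simp only [mul_zero, zero_mul]
  map_add' X Y := by simp only [mul_add, add_mul]
  commutes' r := by
    show (↑A⁻¹ : Mat n) * algebraMap ℂ (Mat n) r * ↑A = algebraMap ℂ (Mat n) r
    rw [mul_assoc, Algebra.commutes r ((A : Mat n)), ← mul_assoc, Units.inv_mul, one_mul]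

lemma conjAlgHom_apply {n : ℕ} (A : (Mat n)ˣ) (X : Mat n) :
    conjAlgHom A X = ↑A⁻¹ * X * ↑A := rfl

lemma simConj_refl {n : ℕ} (P : Mat n × Mat n) : SimConj P P :=
  ⟨1, by rw [inv_one, Units.val_one, one_mul, mul_one],
      by rw [inv_one, Units.val_one, one_mul, mul_one]⟩

lemma simConj_symm {n : ℕ} {P Q : Mat n × Mat n} (h : SimConj P Q) : SimConj Q P := by
  obtain ⟨A, h1, h2⟩ := h
  refine ⟨A⁻¹, ?_, ?_⟩
  · rw [inv_inv, h1]
    simp only [mul_assoc, Units.mul_inv_cancel_left, Units.mul_inv, mul_one]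
  · rw [inv_inv, h2]
    simp only [mul_assoc, Units.mul_inv_cancel_left, Units.mul_inv, mul_one]

lemma simConj_trans {n : ℕ} {P Q R : Mat n × Mat n} (h : SimConj P Q) (h' : SimConj Q R) :
    SimConj P R := by
  obtain ⟨A, h1, h2⟩ := h
  obtain ⟨B, h1', h2'⟩ := h'
  refine ⟨A * B, ?_, ?_⟩
  · rw [h1', h1, _root_.mul_inv_rev, Units.val_mul, Units.val_mul]
    simp only [mul_assoc]
  · rw [h2', h2, _root_.mul_inv_rev, Units.val_mul, Units.val_mul]
    simp only [mul_assoc]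

/-- The setoid of simultaneous conjugacy on Calogero–Moser pairs. -/
def CMSetoid (n : ℕ) : Setoid {P : Mat n × Mat n // IsCMPair P} where
  r P Q := SimConj P.1 Q.1
  iseqv := ⟨fun P => simConj_refl P.1, simConj_symm, simConj_trans⟩

/-- The `n`-th Calogero–Moser space: simultaneous conjugacy classes of pairs
`(X,Y)` of `n×n` complex matrices with `rank ([X,Y] + 1) = 1`. -/
def CMSpace (n : ℕ) := Quotient (CMSetoid n)

/-- The class of a Calogero–Moser pair in the Calogero–Moser space. -/
def CMSpace.mk {n : ℕ} (P : Mat n × Mat n) (h : IsCMPair P) : CMSpace n :=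
  Quotient.mk (CMSetoid n) ⟨P, h⟩

/-- The action `Φ_p (X,Y) = (X + p(Y), Y)` on pairs of matrices. -/
def phiPair {n : ℕ} (p : ℂ[X]) (P : Mat n × Mat n) : Mat n × Mat n :=
  (P.1 + aeval P.2 p, P.2)

/-- The action `Ψ_q (X,Y) = (X, Y + q(X))` on pairs of matrices. -/
def psiPair {n : ℕ} (q : ℂ[X]) (P : Mat n × Mat n) : Mat n × Mat n :=
  (P.1, P.2 + aeval P.1 q)

lemma commute_aeval {n : ℕ} (Y : Mat n) (p : ℂ[X]) : Commute (aeval Y p) Y := by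
  simpa using (Commute.all p Polynomial.X).map (aeval Y)

lemma isCMPair_phiPair {n : ℕ} (p : ℂ[X]) {P : Mat n × Mat n} (h : IsCMPair P) :
    IsCMPair (phiPair p P) := by
  have hc := (commute_aeval P.2 p).eq
  unfold IsCMPair phiPair at *
  dsimp only
  rw [add_mul, mul_add, hc]
  convert h using 2
  abel

lemma isCMPair_psiPair {n : ℕ} (q : ℂ[X]) {P : Mat n × Mat n} (h : IsCMPair P) :
    IsCMPair (psiPair q P) := by
  have hc := (commute_aeval P.1 q).eq
  unfold IsCMPair psiPair at *
  dsimp only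
  rw [add_mul, mul_add, hc]
  convert h using 2
  abel

lemma simConj_phiPair {n : ℕ} (p : ℂ[X]) {P Q : Mat n × Mat n} (h : SimConj P Q) :
    SimConj (phiPair p P) (phiPair p Q) := by
  obtain ⟨A, h1, h2⟩ := h
  refine ⟨A, ?_, h2⟩
  have hconj : aeval ((↑A⁻¹ : Mat n) * P.2 * (↑A : Mat n)) p
      = (↑A⁻¹ : Mat n) * aeval P.2 p * (↑A : Mat n) := by
    simpa only [conjAlgHom_apply] using aeval_algHom_apply (conjAlgHom A) P.2 p
  show Q.1 + aeval Q.2 p = (↑A⁻¹ : Mat n) * (P.1 + aeval P.2 p) * (↑A : Mat n)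
  rw [h1, h2, hconj, mul_add, add_mul]

lemma simConj_psiPair {n : ℕ} (q : ℂ[X]) {P Q : Mat n × Mat n} (h : SimConj P Q) :
    SimConj (psiPair q P) (psiPair q Q) := by
  obtain ⟨A, h1, h2⟩ := h
  refine ⟨A, h1, ?_⟩
  have hconj : aeval ((↑A⁻¹ : Mat n) * P.1 * (↑A : Mat n)) q
      = (↑A⁻¹ : Mat n) * aeval P.1 q * (↑A : Mat n) := by
    simpa only [conjAlgHom_apply] using aeval_algHom_apply (conjAlgHom A) P.1 q
  show Q.2 + aeval Q.1 q = (↑A⁻¹ : Mat n) * (P.2 + aeval P.1 q) * (↑A : Mat n)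
  rw [h1, h2, hconj, mul_add, add_mul]

/-- The action `Φ_p` on the Calogero–Moser space. -/
def Phi {n : ℕ} (p : ℂ[X]) : CMSpace n → CMSpace n :=
  @Quotient.map _ _ (CMSetoid n) (CMSetoid n)
    (fun P => ⟨phiPair p P.1, isCMPair_phiPair p P.2⟩)
    (fun _ _ h => simConj_phiPair p h)

/-- The action `Ψ_q` on the Calogero–Moser space. -/
def Psi {n : ℕ} (q : ℂ[X]) : CMSpace n → CMSpace n :=
  @Quotient.map _ _ (CMSetoid n) (CMSetoid n)
    (fun P => ⟨psiPair q P.1, isCMPair_psiPair q P.2⟩)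
    (fun _ _ h => simConj_psiPair q h)


-- matrices block
/-- The subdiagonal matrix `X(a)` with `(i+1,i)` entry `a i` (1-indexed). -/
def subd (n : ℕ) (a : ℕ → ℂ) : Mat n :=
  Matrix.of fun i j => if (i : ℕ) = (j : ℕ) + 1 then a (i : ℕ) else 0

/-- The matrix `X₀` with subdiagonal entries `1, 2, …, n-1`. -/
def X0 (n : ℕ) : Mat n := subd n (fun i => (i : ℂ))

/-- The matrix `Y₀` with superdiagonal entries all `1`. -/
def Y0 (n : ℕ) : Mat n :=
  Matrix.of fun i j => if (j : ℕ) = (i : ℕ) + 1 then 1 else 0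

/-- The vector `a(r) = (1, 2, …, r-1, -(n-r), …, -2, -1)` (1-indexed entries `1,…,n-1`). -/
def avec (n r : ℕ) : ℕ → ℂ := fun i => if i < r then (i : ℂ) else (i : ℂ) - n



-- aux defs
def ee (n m : ℕ) : Fin n → ℂ := fun j => if (j : ℕ) = m then 1 else 0

def uu (n k : ℕ) : Fin n → ℂ :=
  if k % (n - 1) = 0 then ee n 0 - ee n (n - 1) else ee n (k % (n - 1))

def cc (n k : ℕ) : ℂ :=
  if k % (n - 1) = 0 then -(n : ℂ)
  else if k % (n - 1) = n - 2 then 1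
  else ((k % (n - 1) : ℕ) : ℂ) + 1 - n

def MM (n : ℕ) : Mat n := subd n (avec n 1) + Y0 n ^ (n - 2)

lemma sum_ite_coe {n : ℕ} (m : ℕ) (f : ℕ → ℂ) :
    (∑ j : Fin n, if (j : ℕ) = m then f (j : ℕ) else 0) = if m < n then f m else 0 := by
  split_ifs with h
  · rw [Finset.sum_eq_single (⟨m, h⟩ : Fin n)]
    · simp
    · intro j _ hj
      rw [if_neg]
      intro hc
      exact hj (Fin.ext hc)
    · intro hc; exact absurd (Finset.mem_univ _) hc
  · apply Finset.sum_eq_zero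
    intro j _
    rw [if_neg]
    intro hc
    exact h (hc ▸ j.isLt)

lemma mulVec_ee {n : ℕ} (A : Mat n) (m : ℕ) (hm : m < n) (i : Fin n) :
    (A *ᵥ ee n m) i = A i ⟨m, hm⟩ := by
  simp only [Matrix.mulVec, dotProduct, ee]
  rw [Finset.sum_eq_single (⟨m, hm⟩ : Fin n)]
  · simp
  · intro j _ hj
    rw [if_neg, mul_zero]
    intro hc; exact hj (Fin.ext hc)
  · intro hc; exact absurd (Finset.mem_univ _) hc

lemma mulVec_ee' {n : ℕ} (A : Mat n) (j : Fin n) (i : Fin n) :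
    (A *ᵥ ee n (j : ℕ)) i = A i j := by
  rw [mulVec_ee A _ j.isLt]

lemma Y0_pow_apply {n : ℕ} (k : ℕ) (i j : Fin n) :
    (Y0 n ^ k) i j = if (j : ℕ) = (i : ℕ) + k then 1 else 0 := by
  induction k generalizing j with
  | zero =>
    rw [pow_zero, Matrix.one_apply]
    have := j.isLt
    by_cases h : i = j
    · subst h; simp
    · rw [if_neg h, if_neg]
      intro hc
      exact h (Fin.ext (by omega))
  | succ k ih =>
    rw [pow_succ, Matrix.mul_apply]
    have : ∀ l : Fin n, (Y0 n ^ k) i l * Y0 n l j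
        = if (l : ℕ) = (i : ℕ) + k then (if (j:ℕ) = (l:ℕ) + 1 then 1 else 0) else 0 := by
      intro l
      rw [ih l]
      simp only [Y0, Matrix.of_apply]
      split_ifs <;> ring
    rw [Finset.sum_congr rfl (fun l _ => this l)]
    rw [sum_ite_coe ((i:ℕ) + k) (fun x => if (j:ℕ) = x + 1 then 1 else 0)]
    have hj := j.isLt
    split_ifs with h1 h2 h3 h3 <;> first | rfl | omega

lemma Y0_pow_n {n : ℕ} : (Y0 n) ^ n = 0 := by
  ext i j
  rw [Y0_pow_apply, Matrix.zero_apply, if_neg]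
  have := j.isLt
  omega

lemma MM_apply {n : ℕ} (i j : Fin n) :
    MM n i j = (if (i : ℕ) = (j : ℕ) + 1 then ((i : ℕ) : ℂ) - n else 0)
      + (if (j : ℕ) = (i : ℕ) + (n - 2) then 1 else 0) := by
  rw [MM, Matrix.add_apply, Y0_pow_apply]
  congr 1
  simp only [subd, avec, Matrix.of_apply]
  split_ifs with h1 h2 <;> first | omega | rfl

lemma col0 {n : ℕ} (hn : 3 ≤ n) : MM n *ᵥ ee n 0 = ((1 : ℂ) - n) • ee n 1 := by
  funext i
  rw [mulVec_ee (MM n) 0 (by omega), MM_apply]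
  simp only [ee, Pi.smul_apply, smul_eq_mul]
  by_cases h1 : (i : ℕ) = 1
  · rw [if_pos (by omega), if_neg (by omega), if_pos h1, h1]
    push_cast; ring
  · rw [if_neg (by omega), if_neg (by omega), if_neg h1]; ring

lemma colLast {n : ℕ} (hn : 3 ≤ n) : MM n *ᵥ ee n (n - 1) = ee n 1 := by
  funext i
  have hi := i.isLt
  rw [mulVec_ee (MM n) (n - 1) (by omega), MM_apply]
  simp only [ee]
  by_cases h1 : (i : ℕ) = 1
  · rw [if_neg (by omega), if_pos (by omega), if_pos h1]; ring
  · rw [if_neg (by omega), if_neg (by omega), if_neg h1]; ring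

lemma colMid {n : ℕ} (hn : 3 ≤ n) {r : ℕ} (hr1 : 1 ≤ r) (hr2 : r ≤ n - 3) :
    MM n *ᵥ ee n r = (((r : ℂ) + 1) - n) • ee n (r + 1) := by
  funext i
  rw [mulVec_ee (MM n) r (by omega), MM_apply]
  simp only [ee, Pi.smul_apply, smul_eq_mul]
  by_cases h1 : (i : ℕ) = r + 1
  · rw [if_pos h1, if_neg (by omega), if_pos h1, h1]
    push_cast; ring
  · rw [if_neg h1, if_neg (by omega), if_neg h1]; ring

lemma colPen {n : ℕ} (hn : 3 ≤ n) : MM n *ᵥ ee n (n - 2) = ee n 0 - ee n (n - 1) := by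
  funext i
  have hi := i.isLt
  rw [mulVec_ee (MM n) (n - 2) (by omega), MM_apply]
  simp only [ee, Pi.sub_apply]
  by_cases hl : (i : ℕ) = n - 2 + 1
  · rw [if_pos hl, if_neg (by omega), if_neg (by omega), if_pos (by omega : (i : ℕ) = n - 1), hl]
    rw [show n - 2 + 1 = n - 1 from by omega, Nat.cast_sub (show 1 ≤ n by omega)]
    push_cast; ring
  · by_cases h0 : (i : ℕ) = 0
    · rw [if_neg hl, if_pos (by omega), if_pos h0, if_neg (by omega)]; ring
    · rw [if_neg hl, if_neg (by omega), if_neg h0, if_neg (by omega)]; ring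

lemma ee_eq_uu {n : ℕ} (hn : 3 ≤ n) {m : ℕ} (h1 : 1 ≤ m) (h2 : m ≤ n - 2) :
    ee n m = uu n m := by
  rw [uu, Nat.mod_eq_of_lt (by omega), if_neg (by omega)]

lemma uu_zero {n : ℕ} : uu n 0 = ee n 0 - ee n (n - 1) := by
  rw [uu, if_pos (Nat.zero_mod _)]

lemma stepA {n : ℕ} (hn : 3 ≤ n) (k : ℕ) :
    MM n *ᵥ uu n k = cc n k • uu n (k + 1) := by
  have hr : k % (n - 1) = k % (n - 1) := rfl
  have hrlt : k % (n - 1) < n - 1 := Nat.mod_lt _ (by omega)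
  have hk1 : (k + 1) % (n - 1) = (k % (n - 1) + 1) % (n - 1) := by
    conv_lhs => rw [Nat.add_mod, Nat.mod_eq_of_lt (show 1 < n - 1 by omega)]
  by_cases hr0 : k % (n - 1) = 0
  · rw [uu, if_pos hr0, Matrix.mulVec_sub, col0 hn, colLast hn, cc, if_pos hr0]
    have h1 : (k + 1) % (n - 1) = 1 := by
      rw [hk1, hr0, Nat.mod_eq_of_lt (by omega)]
    rw [uu, h1, if_neg (by omega)]
    funext i
    simp only [Pi.sub_apply, Pi.smul_apply, smul_eq_mul, ee]
    split_ifs <;> ring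
  · by_cases hrp : k % (n - 1) = n - 2
    · rw [uu, if_neg hr0, hrp, colPen hn, cc, if_neg hr0, if_pos hrp]
      have h1 : (k + 1) % (n - 1) = 0 := by
        rw [hk1, hrp, show n - 2 + 1 = n - 1 from by omega, Nat.mod_self]
      rw [uu, h1, if_pos rfl, one_smul]
    · rw [uu, if_neg hr0, colMid hn (by omega) (by omega), cc, if_neg hr0, if_neg hrp]
      have h1 : (k + 1) % (n - 1) = k % (n - 1) + 1 := by
        rw [hk1, Nat.mod_eq_of_lt (by omega)]
      rw [uu, h1, if_neg (by omega)]

lemma iterB {n : ℕ} (hn : 3 ≤ n) (k m : ℕ) :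
    (MM n ^ m) *ᵥ uu n k = (∏ i ∈ Finset.range m, cc n (k + i)) • uu n (k + m) := by
  induction m generalizing k with
  | zero => simp
  | succ m ih =>
    rw [pow_succ, ← Matrix.mulVec_mulVec, stepA hn k, Matrix.mulVec_smul, ih (k + 1)]
    rw [smul_smul, Finset.prod_range_succ' (fun i => cc n (k + i)) m]
    have hp : ∏ i ∈ Finset.range m, cc n (k + (i + 1))
        = ∏ i ∈ Finset.range m, cc n (k + 1 + i) :=
      Finset.prod_congr rfl (fun i _ => by rw [show k + (i + 1) = k + 1 + i from by omega])
    rw [hp, mul_comm (cc n k), add_zero, show k + 1 + m = k + (m + 1) from by omega]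

lemma cc_ne {n : ℕ} (hn : 3 ≤ n) (k : ℕ) : cc n k ≠ 0 := by
  have hrlt : k % (n - 1) < n - 1 := Nat.mod_lt _ (by omega)
  rw [cc]
  split_ifs with h1 h2
  · simp only [neg_ne_zero, Nat.cast_ne_zero]; omega
  · exact one_ne_zero
  · intro h
    have h2 : ((k % (n - 1) + 1 : ℕ) : ℂ) = (n : ℂ) := by push_cast; linear_combination h
    have := Nat.cast_inj (R := ℂ).mp h2
    omega

lemma cc_period {n : ℕ} (k : ℕ) : cc n (k + (n - 1)) = cc n k := by
  rw [cc, cc, Nat.add_mod_right]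

lemma uu_period {n : ℕ} (k : ℕ) : uu n (k + (n - 1)) = uu n k := by
  rw [uu, uu, Nat.add_mod_right]

lemma prod_shift {n : ℕ} (hn : 3 ≤ n) (k : ℕ) :
    ∏ i ∈ Finset.range (n - 1), cc n (k + i) = ∏ i ∈ Finset.range (n - 1), cc n i := by
  induction k with
  | zero => simp
  | succ k ih =>
    rw [← ih]
    apply mul_right_cancel₀ (cc_ne hn k)
    have e1 : (∏ i ∈ Finset.range (n - 1), cc n (k + 1 + i)) * cc n k
        = ∏ i ∈ Finset.range n, cc n (k + i) := by
      have h := Finset.prod_range_succ' (fun i => cc n (k + i)) (n - 1)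
      rw [show n - 1 + 1 = n from by omega] at h
      rw [h, add_zero]
      congr 1
      exact Finset.prod_congr rfl (fun i _ => by rw [show k + (i + 1) = k + 1 + i from by omega])
    have e2 : (∏ i ∈ Finset.range (n - 1), cc n (k + i)) * cc n k
        = ∏ i ∈ Finset.range n, cc n (k + i) := by
      have h := Finset.prod_range_succ (fun i => cc n (k + i)) (n - 1)
      rw [show n - 1 + 1 = n from by omega] at h
      rw [h, cc_period]
    rw [e1, e2]

lemma prod_range_add_two (m : ℕ) : ∏ j ∈ Finset.range m, (j + 2) = (m + 1).factorial := by
  induction m with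
  | zero => simp
  | succ m ih =>
    rw [Finset.prod_range_succ, ih, Nat.factorial_succ (m + 1)]
    ring

lemma prod_nat_desc {n : ℕ} (hn : 3 ≤ n) :
    ∏ i ∈ Finset.range (n - 3), (n - 2 - i) = (n - 2).factorial := by
  have h := Finset.prod_range_reflect (fun j => j + 2) (n - 3)
  have h2 : ∀ i ∈ Finset.range (n - 3), n - 3 - 1 - i + 2 = n - 2 - i := by
    intro i hi; simp only [Finset.mem_range] at hi; omega
  rw [Finset.prod_congr rfl h2] at h
  rw [h, prod_range_add_two, show n - 3 + 1 = n - 2 from by omega]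

lemma prodCycle {n : ℕ} (hn : 3 ≤ n) (hodd : Odd n) :
    ∏ i ∈ Finset.range (n - 1), cc n i
      = -(((n - 1).factorial : ℂ) + ((n - 2).factorial : ℂ)) := by
  have hcc0 : cc n 0 = -(n : ℂ) := by
    rw [cc, if_pos (Nat.zero_mod _)]
  have hccpen : cc n (n - 2) = 1 := by
    rw [cc, Nat.mod_eq_of_lt (by omega), if_neg (by omega), if_pos rfl]
  have hccmid : ∀ i ∈ Finset.range (n - 3), cc n (i + 1) = -(((n - 2 - i : ℕ)) : ℂ) := by
    intro i hi
    simp only [Finset.mem_range] at hi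
    rw [cc, Nat.mod_eq_of_lt (by omega), if_neg (by omega), if_neg (by omega)]
    rw [Nat.cast_sub (by omega : i ≤ n - 2), Nat.cast_sub (by omega : 2 ≤ n)]
    push_cast; ring
  have e1 : ∏ i ∈ Finset.range (n - 1), cc n i
      = (∏ i ∈ Finset.range (n - 2), cc n (i + 1)) * cc n 0 := by
    have h := Finset.prod_range_succ' (cc n) (n - 2)
    rw [show n - 2 + 1 = n - 1 from by omega] at h
    exact h
  have e2 : ∏ i ∈ Finset.range (n - 2), cc n (i + 1)
      = (∏ i ∈ Finset.range (n - 3), cc n (i + 1)) * cc n (n - 2) := by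
    have h := Finset.prod_range_succ (fun i => cc n (i + 1)) (n - 3)
    rw [show n - 3 + 1 = n - 2 from by omega] at h
    exact h
  have e3 : ∏ i ∈ Finset.range (n - 3), cc n (i + 1) = ((n - 2).factorial : ℂ) := by
    rw [Finset.prod_congr rfl hccmid]
    have : ∀ i ∈ Finset.range (n - 3), -(((n - 2 - i : ℕ)) : ℂ)
        = (-1) * (((n - 2 - i : ℕ)) : ℂ) := by intro i _; ring
    rw [Finset.prod_congr rfl this, Finset.prod_mul_distrib, Finset.prod_const,
      Finset.card_range]
    have hev : Even (n - 3) := by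
      obtain ⟨m, hm⟩ := hodd; exact ⟨m - 1, by omega⟩
    rw [hev.neg_one_pow, one_mul, ← Nat.cast_prod, prod_nat_desc hn]
  have hfact : ((n - 1).factorial : ℂ) + ((n - 2).factorial : ℂ)
      = (n : ℂ) * ((n - 2).factorial : ℂ) := by
    have h1 : (n - 1).factorial = (n - 1) * (n - 2).factorial := by
      rw [show n - 1 = (n - 2) + 1 from by omega, Nat.factorial_succ,
        show n - 2 + 1 = n - 1 from by omega]
    rw [h1]
    push_cast [Nat.cast_sub (show 1 ≤ n by omega)]
    ring
  rw [e1, e2, e3, hccpen, hcc0, hfact]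
  ring

lemma Mpow {n : ℕ} (hn : 3 ≤ n) (hodd : Odd n) :
    MM n ^ n = (-(((n - 1).factorial : ℂ) + ((n - 2).factorial : ℂ))) • MM n := by
  set α : ℂ := ((n - 1).factorial : ℂ) + ((n - 2).factorial : ℂ) with hα
  have key : ∀ k, (MM n ^ (n - 1)) *ᵥ uu n k = (-α) • uu n k := by
    intro k
    rw [iterB hn, prod_shift hn, prodCycle hn hodd, uu_period]
  have cols : ∀ r : Fin n, (MM n ^ n) *ᵥ ee n (r : ℕ) = (-α) • (MM n *ᵥ ee n (r : ℕ)) := by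
    intro r
    have hsplit : MM n ^ n = MM n ^ (n - 1) * MM n := by
      rw [← pow_succ, show n - 1 + 1 = n from by omega]
    have hcol : ∃ (s : ℂ) (k : ℕ), MM n *ᵥ ee n (r : ℕ) = s • uu n k := by
      have hr := r.isLt
      by_cases h0 : (r : ℕ) = 0
      · exact ⟨(1 : ℂ) - n, 1, by
          rw [h0, col0 hn, ee_eq_uu hn (by omega) (by omega)]⟩
      · by_cases hl : (r : ℕ) = n - 1
        · exact ⟨1, 1, by
            rw [hl, colLast hn, ee_eq_uu hn (by omega) (by omega), one_smul]⟩
        · by_cases hp : (r : ℕ) = n - 2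
          · exact ⟨1, 0, by rw [hp, colPen hn, uu_zero, one_smul]⟩
          · exact ⟨((r : ℕ) : ℂ) + 1 - n, (r : ℕ) + 1, by
              rw [ee_eq_uu hn (by omega) (by omega), stepA hn, cc,
                Nat.mod_eq_of_lt (by omega), if_neg (by omega), if_neg (by omega)]⟩
    obtain ⟨s, k, hcol⟩ := hcol
    rw [hsplit, ← Matrix.mulVec_mulVec, hcol, Matrix.mulVec_smul, key, smul_comm]
  ext i j
  have h := congrFun (cols j) i
  rw [mulVec_ee' _ j i] at h
  rw [h, Pi.smul_apply, mulVec_ee' _ j i, Matrix.smul_apply]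

lemma traceYY {n : ℕ} : (Y0 n * Y0 n).trace = 0 := by
  rw [Matrix.trace]
  apply Finset.sum_eq_zero
  intro i _
  rw [Matrix.diag_apply, Matrix.mul_apply]
  apply Finset.sum_eq_zero
  intro j _
  simp only [Y0, Matrix.of_apply]
  split_ifs <;> first | omega | ring

lemma traceMM {n : ℕ} (hn4 : 4 ≤ n) : (MM n * MM n).trace = 0 := by
  rw [Matrix.trace]
  apply Finset.sum_eq_zero
  intro i _
  rw [Matrix.diag_apply, Matrix.mul_apply]
  apply Finset.sum_eq_zero
  intro j _
  rw [MM_apply, MM_apply]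
  split_ifs <;> first | (exfalso; omega) | ring

lemma traceYM {n : ℕ} (hn : 3 ≤ n) :
    (Y0 n * MM n).trace * 2 = (n : ℂ) - (n : ℂ) ^ 2 := by
  have step1 : (Y0 n * MM n).trace
      = ∑ m ∈ Finset.range (n - 1), (((m + 1 : ℕ) : ℂ) - n) := by
    rw [Matrix.trace]
    have hterm : ∀ i : Fin n, (Y0 n * MM n).diag i
        = if (i : ℕ) + 1 < n then (((i : ℕ) + 1 : ℕ) : ℂ) - n else 0 := by
      intro i
      rw [Matrix.diag_apply, Matrix.mul_apply]
      have h1 : ∀ j : Fin n, Y0 n i j * MM n j i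
          = if (j : ℕ) = (i : ℕ) + 1 then (((j : ℕ) : ℕ) : ℂ) - n else 0 := by
        intro j
        rw [MM_apply]
        simp only [Y0, Matrix.of_apply]
        split_ifs <;> first | (exfalso; omega) | ring
      rw [Finset.sum_congr rfl (fun j _ => h1 j),
        sum_ite_coe ((i : ℕ) + 1) (fun x => ((x : ℕ) : ℂ) - n)]
    rw [Finset.sum_congr rfl (fun i _ => hterm i),
      Fin.sum_univ_eq_sum_range (fun m => if m + 1 < n then ((m + 1 : ℕ) : ℂ) - n else 0) n]
    have hsplit2 := Finset.sum_range_succ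
      (fun m => if m + 1 < n then ((m + 1 : ℕ) : ℂ) - n else 0) (n - 1)
    rw [show n - 1 + 1 = n from by omega] at hsplit2
    rw [hsplit2, if_neg (by omega), add_zero]
    exact Finset.sum_congr rfl (fun m hm => by
      rw [if_pos (by simp only [Finset.mem_range] at hm; omega)])
  rw [step1, Finset.sum_mul]
  have hterm2 : ∀ m ∈ Finset.range (n - 1), (((m + 1 : ℕ) : ℂ) - n) * 2
      = 2 * ((m : ℕ) : ℂ) + (2 - 2 * n) := by
    intro m _; push_cast; ring
  rw [Finset.sum_congr rfl hterm2, Finset.sum_add_distrib, Finset.sum_const,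
    Finset.card_range, ← Finset.mul_sum, ← Nat.cast_sum, nsmul_eq_mul]
  have c1 : ((n - 1 : ℕ) : ℂ) = (n : ℂ) - 1 := by
    rw [Nat.cast_sub (show 1 ≤ n by omega)]; simp
  have c2 : (((n - 1) * (n - 2) : ℕ) : ℂ) = ((n : ℂ) - 1) * ((n : ℂ) - 2) := by
    rw [Nat.cast_mul, Nat.cast_sub (show 1 ≤ n by omega),
      Nat.cast_sub (show 2 ≤ n by omega)]
    push_cast; ring
  have hgnat : (∑ i ∈ Finset.range (n - 1), i) * 2 = (n - 1) * (n - 2) := by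
    rw [Finset.sum_range_id_mul_two]; congr 1 <;> omega
  have hg : 2 * ((∑ i ∈ Finset.range (n - 1), i : ℕ) : ℂ)
      = ((n : ℂ) - 1) * ((n : ℂ) - 2) := by
    rw [← c2, ← hgnat]; push_cast; ring
  rw [c1]
  linear_combination hg

lemma traceMM3 : (MM 3 * MM 3).trace = -6 := by
  have h := MM_apply (n := 3)
  simp only [Matrix.trace, Matrix.diag_apply, Matrix.mul_apply, Fin.sum_univ_three, h]
  norm_num [Fin.val_zero, Fin.val_one, Fin.val_two]

lemma notNilp {n : ℕ} (hn : 3 ≤ n) (hodd : Odd n) :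
    ¬ IsNilpotent (Y0 n
      - (2 * (((n - 1).factorial : ℂ) + ((n - 2).factorial : ℂ))) • MM n) := by
  intro h
  set s : ℂ := 2 * (((n - 1).factorial : ℂ) + ((n - 2).factorial : ℂ)) with hs
  set B := Y0 n - s • MM n with hB
  have e : B * B = Y0 n * Y0 n - s • (MM n * Y0 n)
      - (s • (Y0 n * MM n) - (s * s) • (MM n * MM n)) := by
    rw [hB]; simp only [sub_mul, mul_sub, Matrix.smul_mul, Matrix.mul_smul, smul_smul]
  have htr : (B * B).trace
      = -(s * (Y0 n * MM n).trace)
        - (s * (Y0 n * MM n).trace - (s * s) * (MM n * MM n).trace) := by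
    rw [e]
    simp only [Matrix.trace_sub, Matrix.trace_smul, smul_eq_mul, traceYY,
      Matrix.trace_mul_comm (MM n) (Y0 n)]
    ring
  have hnil2 : IsNilpotent (B * B) := by
    obtain ⟨k, hk⟩ := h
    exact ⟨k, by rw [(Commute.refl B).mul_pow, hk, mul_zero]⟩
  have h0 : (B * B).trace = 0 := (Matrix.isNilpotent_trace_of_isNilpotent hnil2).eq_zero
  rw [htr] at h0
  have hsne : s ≠ 0 := by
    rw [hs, ← Nat.cast_add, show ((2:ℂ)) = ((2:ℕ):ℂ) from by norm_num, ← Nat.cast_mul]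
    rw [Nat.cast_ne_zero]
    have := Nat.factorial_pos (n - 1)
    have := Nat.factorial_pos (n - 2)
    omega
  have hcase : n = 3 ∨ 4 ≤ n := by omega
  rcases hcase with h3 | h4
  · subst h3
    have hT : (Y0 3 * MM 3).trace = -3 := by
      have hh := traceYM (n := 3) (by norm_num)
      have : ((3:ℕ):ℂ) - ((3:ℕ):ℂ)^2 = -6 := by norm_num
      rw [this] at hh
      linear_combination hh / 2
    have hs6 : s = 6 := by rw [hs]; norm_num [Nat.factorial]
    rw [hT, traceMM3, hs6] at h0
    norm_num at h0
  · rw [traceMM h4] at h0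
    have hcomb : s * ((Y0 n * MM n).trace * 2) = 0 := by linear_combination (-1 : ℂ) * h0
    rw [traceYM hn] at hcomb
    have h1 : (n : ℂ) ≠ 0 := Nat.cast_ne_zero.mpr (by omega)
    have h2 : (n : ℂ) ≠ 1 := by
      intro hc
      have : ((n : ℕ) : ℂ) = ((1 : ℕ) : ℂ) := by rw [hc]; norm_num
      have := Nat.cast_inj (R := ℂ).mp this
      omega
    have hnn : (n : ℂ) - (n : ℂ) ^ 2 ≠ 0 := by
      intro hc
      have hz : (n : ℂ) * (1 - n) = 0 := by linear_combination hc
      rcases mul_eq_zero.mp hz with hc' | hc'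
      · exact h1 hc'
      · exact h2 (by linear_combination -hc')
    exact (mul_ne_zero hsne hnn) hcomb


/-- The odd case: with `α = (n-1)! + (n-2)!`, `χ(t) = tⁿ - α t` and `p(t) = t^{n-2}`, one has
`χ(X₁ + Y₀^{n-2}) = -2α (X₁ + Y₀^{n-2})`, the matrix `Y₀ - 2α(X₁ + Y₀^{n-2})` is not
nilpotent, and `Φ_{-p}Ψ_χΦ_p` does not fix the conjugacy class of `(X₁, Y₀)`. -/
theorem odd_case_not_fixed (n : ℕ) (hn : 3 ≤ n) (hodd : Odd n) :
    aeval (subd n (avec n 1) + Y0 n ^ (n - 2))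
        (Polynomial.X ^ n -
          Polynomial.C ((Nat.factorial (n - 1) : ℂ) + (Nat.factorial (n - 2) : ℂ)) *
            Polynomial.X) =
      (-(2 * ((Nat.factorial (n - 1) : ℂ) + (Nat.factorial (n - 2) : ℂ)))) •
        (subd n (avec n 1) + Y0 n ^ (n - 2)) ∧
    ¬ IsNilpotent (Y0 n -
        (2 * ((Nat.factorial (n - 1) : ℂ) + (Nat.factorial (n - 2) : ℂ))) •
          (subd n (avec n 1) + Y0 n ^ (n - 2))) ∧
    ¬ SimConj (subd n (avec n 1), Y0 n)
        (phiPair (-(Polynomial.X ^ (n - 2)))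
          (psiPair
            (Polynomial.X ^ n -
              Polynomial.C ((Nat.factorial (n - 1) : ℂ) + (Nat.factorial (n - 2) : ℂ)) *
                Polynomial.X)
            (phiPair (Polynomial.X ^ (n - 2)) (subd n (avec n 1), Y0 n)))) := by
  set α : ℂ := ((n - 1).factorial : ℂ) + ((n - 2).factorial : ℂ) with hα
  have hMM : subd n (avec n 1) + Y0 n ^ (n - 2) = MM n := rfl
  have hMn := Mpow hn hodd
  have haev : aeval (MM n) (Polynomial.X ^ n - Polynomial.C α * Polynomial.X)
      = (-(2 * α)) • MM n := by
    rw [map_sub, _root_.map_mul, aeval_X_pow, aeval_C, aeval_X, hMn, ← Algebra.smul_def,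
      ← sub_smul]
    congr 1
    ring
  refine ⟨?_, ?_, ?_⟩
  · rw [hMM]; exact haev
  · rw [hMM]; exact notNilp hn hodd
  · rintro ⟨A, -, h2⟩
    have hsecond : (phiPair (-(Polynomial.X ^ (n - 2)))
        (psiPair
          (Polynomial.X ^ n - Polynomial.C α * Polynomial.X)
          (phiPair (Polynomial.X ^ (n - 2)) (subd n (avec n 1), Y0 n)))).2
        = Y0 n - (2 * α) • MM n := by
      simp only [phiPair, psiPair, aeval_X_pow]
      rw [hMM, haev, neg_smul, ← sub_eq_add_neg]
    rw [hsecond] at h2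
    refine absurd ?_ (notNilp hn hodd)
    rw [h2]
    refine ⟨n, ?_⟩
    have hc : ((↑A⁻¹ : Mat n) * Y0 n * (↑A : Mat n)) ^ n
        = (↑A⁻¹ : Mat n) * Y0 n ^ n * (↑A : Mat n) := by
      have h := Units.conj_pow A⁻¹ (Y0 n) n
      rwa [inv_inv] at h
    rw [hc, Y0_pow_n, mul_zero, zero_mul]

end
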